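/- The valuation v̂ on four goods {i,j,k,l} defined by v̂(∅)=0, v̂ = 3 on singletons, v̂ = 4 on all two-element sets except v̂({k,l})=5, and v̂ = 5 on all sets of size ≥ 3, is nondecreasing and submodular, but its 2-satiation v(A) = max_{B⊆A, |B|≤2} v̂(B) is not submodular (in particular v(ijkl) − v(ijk) − v(ijl) + v(ij) > 0). -/
import Mathlib

def fhat (A : Finset (Fin 4)) : ℕ :=
  if A.card ≤ 1 then 3 * A.card
  else if A = {2, 3} ∨ 3 ≤ A.card then 5 else 4

lemma fhat_mono : ∀ A B : Finset (Fin 4), A ⊆ B → fhat A ≤ fhat B := by decide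

lemma fhat_sub : ∀ A B : Finset (Fin 4), fhat (A ∪ B) + fhat (A ∩ B) ≤ fhat A + fhat B := by
  decide

theorem satiation_not_submodular
    (vhat v : Finset (Fin 4) → ℝ)
    (hvhat : ∀ A : Finset (Fin 4), vhat A =
      if A.card ≤ 1 then 3 * A.card
      else if A = {2, 3} ∨ 3 ≤ A.card then 5 else 4)
    (hv : ∀ A : Finset (Fin 4),
      IsGreatest {r : ℝ | ∃ B ⊆ A, B.card ≤ 2 ∧ r = vhat B} (v A)) :
    (∀ A B : Finset (Fin 4), A ⊆ B → vhat A ≤ vhat B) ∧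
    (∀ A B : Finset (Fin 4), vhat (A ∪ B) + vhat (A ∩ B) ≤ vhat A + vhat B) ∧
    0 < v Finset.univ - v {0, 1, 2} - v {0, 1, 3} + v {0, 1} ∧
    ¬ (∀ A B : Finset (Fin 4), v (A ∪ B) + v (A ∩ B) ≤ v A + v B) := by
  have hcast : ∀ A : Finset (Fin 4), vhat A = (fhat A : ℝ) := by
    intro A
    rw [hvhat A]
    unfold fhat
    split_ifs <;> push_cast <;> try ring
  -- vhat values
  have h23 : vhat ({2, 3} : Finset (Fin 4)) = 5 := by
    rw [hcast, show fhat ({2, 3} : Finset (Fin 4)) = 5 from by decide]; norm_num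
  have h01 : vhat ({0, 1} : Finset (Fin 4)) = 4 := by
    rw [hcast, show fhat ({0, 1} : Finset (Fin 4)) = 4 from by decide]; norm_num
  have hle4 : ∀ B : Finset (Fin 4), B.card ≤ 2 → B ≠ {2, 3} → vhat B ≤ 4 := by
    intro B hc hne
    rw [hcast]
    have : fhat B ≤ 4 := by
      rw [fhat]
      split_ifs with h1 h2
      · omega
      · rcases h2 with h2 | h2
        · exact absurd h2 hne
        · omega
      · exact le_refl 4
    exact_mod_cast this
  have hle5 : ∀ B : Finset (Fin 4), vhat B ≤ 5 := by
    intro B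
    rw [hcast]
    have : fhat B ≤ 5 := by rw [fhat]; split_ifs <;> omega
    exact_mod_cast this
  -- value of v at specific sets
  have hvU : v Finset.univ = 5 := by
    obtain ⟨⟨B, hB, hBc, hBv⟩, hub⟩ := hv Finset.univ
    have h1 : v Finset.univ ≤ 5 := hBv ▸ hle5 B
    have h2 : (5 : ℝ) ≤ v Finset.univ := by
      apply hub
      exact ⟨{2, 3}, by decide, by decide, h23.symm⟩
    linarith
  have hv012 : v ({0, 1, 2} : Finset (Fin 4)) = 4 := by
    obtain ⟨⟨B, hB, hBc, hBv⟩, hub⟩ := hv ({0, 1, 2} : Finset (Fin 4))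
    have hne : B ≠ {2, 3} := by
      intro h; subst h
      exact absurd (hB (by decide : (3 : Fin 4) ∈ ({2, 3} : Finset (Fin 4)))) (by decide)
    have h1 : v ({0, 1, 2} : Finset (Fin 4)) ≤ 4 := hBv ▸ hle4 B hBc hne
    have h2 : (4 : ℝ) ≤ v ({0, 1, 2} : Finset (Fin 4)) := by
      apply hub
      exact ⟨{0, 1}, by decide, by decide, h01.symm⟩
    linarith
  have hv013 : v ({0, 1, 3} : Finset (Fin 4)) = 4 := by
    obtain ⟨⟨B, hB, hBc, hBv⟩, hub⟩ := hv ({0, 1, 3} : Finset (Fin 4))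
    have hne : B ≠ {2, 3} := by
      intro h; subst h
      exact absurd (hB (by decide : (2 : Fin 4) ∈ ({2, 3} : Finset (Fin 4)))) (by decide)
    have h1 : v ({0, 1, 3} : Finset (Fin 4)) ≤ 4 := hBv ▸ hle4 B hBc hne
    have h2 : (4 : ℝ) ≤ v ({0, 1, 3} : Finset (Fin 4)) := by
      apply hub
      exact ⟨{0, 1}, by decide, by decide, h01.symm⟩
    linarith
  have hv01 : v ({0, 1} : Finset (Fin 4)) = 4 := by
    obtain ⟨⟨B, hB, hBc, hBv⟩, hub⟩ := hv ({0, 1} : Finset (Fin 4))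
    have hne : B ≠ {2, 3} := by
      intro h; subst h
      exact absurd (hB (by decide : (2 : Fin 4) ∈ ({2, 3} : Finset (Fin 4)))) (by decide)
    have h1 : v ({0, 1} : Finset (Fin 4)) ≤ 4 := hBv ▸ hle4 B hBc hne
    have h2 : (4 : ℝ) ≤ v ({0, 1} : Finset (Fin 4)) := by
      apply hub
      exact ⟨{0, 1}, by decide, by decide, h01.symm⟩
    linarith
  refine ⟨?_, ?_, ?_, ?_⟩
  · intro A B h
    rw [hcast, hcast]
    exact_mod_cast fhat_mono A B h
  · intro A B
    rw [hcast, hcast, hcast, hcast]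
    exact_mod_cast fhat_sub A B
  · rw [hvU, hv012, hv013, hv01]; norm_num
  · intro h
    have := h {0, 1, 2} {0, 1, 3}
    have hU : ({0, 1, 2} : Finset (Fin 4)) ∪ {0, 1, 3} = Finset.univ := by decide
    have hI : ({0, 1, 2} : Finset (Fin 4)) ∩ {0, 1, 3} = {0, 1} := by decide
    rw [hU, hI, hvU, hv012, hv013, hv01] at this
    linarith
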